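/- For any stateless deterministic pushdown automaton M with n pushdown symbols accepting a language L ≠ {ε}, there exists an equivalent stateless realtime pushdown automaton with at most n pushdown symbols. -/

import Mathlib

/-- A stateless deterministic pushdown automaton over input alphabet `A`:
one (implicit) state, pushdown alphabet `Γ`, transition function `δ`
(where `δ X none` is an ε-move on top symbol `X`, and `δ X (some a)` is an
input move), an initial pushdown string `α ≠ []`.  Determinism: if an ε-move
is defined on `X`, then no input move is defined on `X`. -/
structure SDPDA (A : Type) where
  Γ : Type
  [instΓ : Fintype Γ]
  δ : Γ → Option A → Option (List Γ)
  det : ∀ X : Γ, δ X none ≠ none → ∀ a : A, δ X (some a) = none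
  α : List Γ
  α_ne : α ≠ []

attribute [instance] SDPDA.instΓ

/-- `M.Steps γ w γ'` : starting with pushdown content `γ` (top of the pushdown
is the head of the list), the automaton can read the input string `w` and end
with pushdown content `γ'`. -/
inductive SDPDA.Steps {A : Type} (M : SDPDA A) : List M.Γ → List A → List M.Γ → Prop
  | refl (γ : List M.Γ) : SDPDA.Steps M γ [] γ
  | input {X : M.Γ} {γ w : List M.Γ} {a : A} {ws : List A} {γ' : List M.Γ} :
      M.δ X (some a) = some w → SDPDA.Steps M (w ++ γ) ws γ' →
      SDPDA.Steps M (X :: γ) (a :: ws) γ'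
  | eps {X : M.Γ} {γ w : List M.Γ} {ws : List A} {γ' : List M.Γ} :
      M.δ X none = some w → SDPDA.Steps M (w ++ γ) ws γ' →
      SDPDA.Steps M (X :: γ) ws γ'

/-- Acceptance by empty pushdown. -/
def SDPDA.Accepts {A : Type} (M : SDPDA A) (w : List A) : Prop :=
  M.Steps M.α w []

/-- A stateless realtime (deterministic, no ε-moves) pushdown automaton over
input alphabet `A`: pushdown alphabet `Γ`, partial transition function `δ`,
and an initial pushdown string `α ≠ []`. -/
structure SRPDA (A : Type) where
  Γ : Type
  [instΓ : Fintype Γ]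
  δ : Γ → A → Option (List Γ)
  α : List Γ
  α_ne : α ≠ []

attribute [instance] SRPDA.instΓ

/-- `M.Steps γ w γ'` : starting with pushdown content `γ` (top of the pushdown
is the head of the list), the automaton reads the input string `w` and ends
with pushdown content `γ'`. -/
inductive SRPDA.Steps {A : Type} (M : SRPDA A) : List M.Γ → List A → List M.Γ → Prop
  | refl (γ : List M.Γ) : SRPDA.Steps M γ [] γ
  | step {X : M.Γ} {γ w : List M.Γ} {a : A} {ws : List A} {γ' : List M.Γ} :
      M.δ X a = some w → SRPDA.Steps M (w ++ γ) ws γ' →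
      SRPDA.Steps M (X :: γ) (a :: ws) γ'

/-- Acceptance by empty pushdown. -/
def SRPDA.Accepts {A : Type} (M : SRPDA A) (w : List A) : Prop :=
  M.Steps M.α w []

namespace SDPDAtoSRPDA

open Classical

variable {A : Type} (M : SDPDA A)

/-- A symbol whose ε-closure empties the pushdown. -/
def Null (X : M.Γ) : Prop := M.Steps [X] [] []

/-- Erase null symbols from a pushdown string. -/
noncomputable def e : List M.Γ → List M.Γ
  | [] => []
  | X :: γ => if Null M X then e γ else X :: e γ

@[simp] theorem e_nil : e M ([] : List M.Γ) = [] := rfl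

theorem e_cons (X : M.Γ) (γ : List M.Γ) :
    e M (X :: γ) = if Null M X then e M γ else X :: e M γ := rfl

theorem e_append (σ ρ : List M.Γ) : e M (σ ++ ρ) = e M σ ++ e M ρ := by
  induction σ with
  | nil => simp
  | cons X σ ih =>
    by_cases h : Null M X <;> simp [e_cons, h, ih]

theorem steps_trans {γ γ' γ'' : List M.Γ} {w1 w2 : List A}
    (h1 : M.Steps γ w1 γ') (h2 : M.Steps γ' w2 γ'') :
    M.Steps γ (w1 ++ w2) γ'' := by
  induction h1 with
  | refl γ => simpa using h2
  | input h s ih => exact .input h (ih h2)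
  | eps h s ih => exact .eps h (ih h2)

theorem steps_lift {σ σ' : List M.Γ} {w : List A} (h : M.Steps σ w σ') (ρ : List M.Γ) :
    M.Steps (σ ++ ρ) w (σ' ++ ρ) := by
  induction h with
  | refl γ => exact .refl _
  | input h s ih => exact .input h (by simpa using ih)
  | eps h s ih => exact .eps h (by simpa using ih)

theorem steps_compose {σ ρ : List M.Γ} {w1 w2 : List A}
    (h1 : M.Steps σ w1 []) (h2 : M.Steps ρ w2 []) :
    M.Steps (σ ++ ρ) (w1 ++ w2) [] :=
  steps_trans M (by simpa using steps_lift M h1 ρ) h2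

theorem steps_split_aux : ∀ γ (w : List A) γ', M.Steps γ w γ' → γ' = [] →
    ∀ σ ρ, γ = σ ++ ρ →
    ∃ w1 w2, w = w1 ++ w2 ∧ M.Steps σ w1 [] ∧ M.Steps ρ w2 [] := by
  intro γ w γ' h
  induction h with
  | refl γ =>
    rintro rfl σ ρ hsp
    rcases List.append_eq_nil_iff.mp hsp.symm with ⟨rfl, rfl⟩
    exact ⟨[], [], rfl, .refl [], .refl []⟩
  | @input X γt u a ws γ' h s ih =>
    rintro rfl σ ρ hsp
    cases σ with
    | nil =>
      simp only [List.nil_append] at hsp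
      subst hsp
      exact ⟨[], a :: ws, rfl, .refl [], .input h s⟩
    | cons Y σ' =>
      simp only [List.cons_append, List.cons.injEq] at hsp
      rcases hsp with ⟨rfl, rfl⟩
      rcases ih rfl (u ++ σ') ρ (by simp) with ⟨w1, w2, rfl, hs1, hs2⟩
      exact ⟨a :: w1, w2, rfl, .input h hs1, hs2⟩
  | @eps X γt u ws γ' h s ih =>
    rintro rfl σ ρ hsp
    cases σ with
    | nil =>
      simp only [List.nil_append] at hsp
      subst hsp
      exact ⟨[], ws, rfl, .refl [], .eps h s⟩
    | cons Y σ' =>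
      simp only [List.cons_append, List.cons.injEq] at hsp
      rcases hsp with ⟨rfl, rfl⟩
      rcases ih rfl (u ++ σ') ρ (by simp) with ⟨w1, w2, rfl, hs1, hs2⟩
      exact ⟨w1, w2, rfl, .eps h hs1, hs2⟩

theorem steps_split {σ ρ : List M.Γ} {w : List A} (h : M.Steps (σ ++ ρ) w []) :
    ∃ w1 w2, w = w1 ++ w2 ∧ M.Steps σ w1 [] ∧ M.Steps ρ w2 [] :=
  steps_split_aux M _ _ _ h rfl σ ρ rfl


theorem e_eq_nil_of_steps : ∀ γ : List M.Γ, M.Steps γ [] [] → e M γ = [] := by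
  intro γ
  induction γ with
  | nil => simp
  | cons X γ ih =>
    intro h
    rcases steps_split M (σ := [X]) (ρ := γ) (by simpa using h) with ⟨w1, w2, hw, h1, h2⟩
    rcases (List.append_eq_nil_iff.mp hw.symm) with ⟨rfl, rfl⟩
    rw [e_cons, if_pos (show Null M X from h1)]
    exact ih h2

theorem steps_of_e_nil : ∀ γ : List M.Γ, e M γ = [] → M.Steps γ [] [] := by
  intro γ
  induction γ with
  | nil => exact fun _ => .refl []
  | cons X γ ih =>
    intro h
    rw [e_cons] at h
    by_cases hX : Null M X
    · rw [if_pos hX] at h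
      have h1 : M.Steps (X :: γ) [] γ := by simpa using steps_lift M hX γ
      simpa using steps_trans M h1 (ih h)
    · rw [if_neg hX] at h
      exact absurd h (by simp)

/-- Un-erasure: a run from the erased stack yields a run from the full stack. -/
theorem unerase : ∀ (σ : List M.Γ) {ρ : List M.Γ} {w : List A},
    M.Steps (e M σ ++ ρ) w [] → M.Steps (σ ++ ρ) w [] := by
  intro σ
  induction σ with
  | nil => intro ρ w h; simpa using h
  | cons X σ ih =>
    intro ρ w h
    by_cases hX : Null M X
    · rw [e_cons, if_pos hX] at h
      have h1 : M.Steps (X :: (σ ++ ρ)) [] (σ ++ ρ) := by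
        simpa using steps_lift M hX (σ ++ ρ)
      simpa using steps_trans M h1 (ih h)
    · rw [e_cons, if_neg hX] at h
      rcases steps_split M (σ := [X]) (ρ := e M σ ++ ρ) (by simpa using h) with
        ⟨w1, w2, rfl, h1, h2⟩
      simpa using steps_compose M (ρ := σ ++ ρ) h1 (ih h2)

/-- Determinism of the ε-moves: terminal ε-reachable stacks are unique. -/
theorem eps_unique : ∀ γ (w : List A) σ1, M.Steps γ w σ1 → w = [] →
    (σ1 = [] ∨ ∃ Y ρ, σ1 = Y :: ρ ∧ M.δ Y none = none) →
    ∀ σ2, M.Steps γ [] σ2 →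
    (σ2 = [] ∨ ∃ Y ρ, σ2 = Y :: ρ ∧ M.δ Y none = none) → σ1 = σ2 := by
  intro γ w σ1 h1
  induction h1 with
  | refl γ =>
    intro _ t1 σ2 h2 t2
    cases h2 with
    | refl => rfl
    | eps h s =>
      rcases t1 with t1 | ⟨Y, ρ, hYρ, hY⟩
      · simp at t1
      · rw [List.cons.injEq] at hYρ
        rw [hYρ.1] at h
        rw [hY] at h
        cases h
  | input h s ih => intro hw; simp at hw
  | @eps X γt u ws σ1 h s ih =>
    intro hw t1 σ2 h2 t2
    cases h2 with
    | refl =>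
      rcases t2 with t2 | ⟨Y, ρ, hYρ, hY⟩
      · simp at t2
      · rw [List.cons.injEq] at hYρ
        rw [hYρ.1, hY] at h
        cases h
    | eps h' s' =>
      rw [h] at h'
      rw [Option.some.injEq] at h'
      subst h'
      exact ih hw t1 σ2 s' t2

/-- Reading a nonempty word forces reaching an ε-free top first. -/
theorem steps_consume : ∀ γ (w : List A) γ'', M.Steps γ w γ'' →
    ∀ a ws, w = a :: ws →
    ∃ Y τ u', M.Steps γ [] (Y :: τ) ∧ M.δ Y none = none ∧
      M.δ Y (some a) = some u' ∧ M.Steps (u' ++ τ) ws γ'' := by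
  intro γ w γ'' h
  induction h with
  | refl γ => intro a ws hw; simp at hw
  | @input X γt u a0 ws0 γ' h s ih =>
    intro a ws hw
    rw [List.cons.injEq] at hw
    rcases hw with ⟨rfl, rfl⟩
    have hne : M.δ X none = none := by
      by_contra h0
      simp [M.det X h0] at h
    exact ⟨X, γt, u, .refl _, hne, h, s⟩
  | @eps X γt u ws0 γ' h s ih =>
    intro a ws hw
    rcases ih a ws hw with ⟨Y, τ, u', hs1, hY, hYa, hs2⟩
    exact ⟨Y, τ, u', .eps h hs1, hY, hYa, hs2⟩


/-- `X` ε-reaches a stack with an ε-free top symbol. -/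
def LiveW (X : M.Γ) : Prop :=
  ∃ p : M.Γ × List M.Γ, M.Steps [X] [] (p.1 :: p.2) ∧ M.δ p.1 none = none

/-- The realtime transition function. -/
noncomputable def delta' : M.Γ → A → Option (List M.Γ) := fun X a =>
  if h : LiveW M X then
    (M.δ h.choose.1 (some a)).map (fun u => e M (u ++ h.choose.2))
  else none

/-- The realtime machine (with a given initial stack). -/
@[reducible] noncomputable def mkRT (α' : List M.Γ) (hα' : α' ≠ []) : SRPDA A :=
  { Γ := M.Γ, δ := delta' M, α := α', α_ne := hα' }

theorem choose_eq {X Y : M.Γ} {τ : List M.Γ} (h : LiveW M X)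
    (hs : M.Steps [X] [] (Y :: τ)) (hY : M.δ Y none = none) :
    h.choose.1 = Y ∧ h.choose.2 = τ := by
  have hu := eps_unique M [X] [] (h.choose.1 :: h.choose.2) h.choose_spec.1 rfl
    (Or.inr ⟨h.choose.1, h.choose.2, rfl, h.choose_spec.2⟩) (Y :: τ) hs
    (Or.inr ⟨Y, τ, rfl, hY⟩)
  rw [List.cons.injEq] at hu
  exact hu

theorem forward {α' : List M.Γ} {hα' : α' ≠ []} :
    ∀ γ (w : List A) γ'', (mkRT M α' hα').Steps γ w γ'' → γ'' = [] →
    M.Steps γ w [] := by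
  intro γ w γ'' h
  induction h with
  | refl γ => rintro rfl; exact .refl []
  | @step X γt w0 a ws γ' hδ s ih =>
    rintro rfl
    have hδ' : delta' M X a = some w0 := hδ
    rw [delta'] at hδ'
    by_cases hl : LiveW M X
    · rw [dif_pos hl] at hδ'
      cases hu : M.δ hl.choose.1 (some a) with
      | none => rw [hu] at hδ'; cases hδ'
      | some u' =>
        rw [hu] at hδ'
        simp only [Option.map_some, Option.some.injEq] at hδ'
        subst hδ'
        -- M-run: X::γt  →ε*  choose.1 :: choose.2 ++ γt  →a→  u' ++ choose.2 ++ γt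
        have s1 : M.Steps (X :: γt) [] (hl.choose.1 :: (hl.choose.2 ++ γt)) := by
          simpa using steps_lift M hl.choose_spec.1 γt
        have s2 : M.Steps ((u' ++ hl.choose.2) ++ γt) ws [] :=
          unerase M (u' ++ hl.choose.2) (ih rfl)
        have s3 : M.Steps (hl.choose.1 :: (hl.choose.2 ++ γt)) (a :: ws) [] :=
          .input hu (by simpa using s2)
        simpa using steps_trans M s1 s3
    · rw [dif_neg hl] at hδ'
      cases hδ'

theorem backward {α' : List M.Γ} {hα' : α' ≠ []} :
    ∀ n (w : List A), w.length ≤ n → ∀ γ, M.Steps γ w [] →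
    (mkRT M α' hα').Steps (e M γ) w [] := by
  intro n
  induction n with
  | zero =>
    intro w hw γ h
    have : w = [] := List.eq_nil_of_length_eq_zero (Nat.le_zero.mp hw)
    subst this
    rw [e_eq_nil_of_steps M γ h]
    exact .refl []
  | succ n ih =>
    intro w hw γ h
    -- inner structural induction
    suffices aux : ∀ γ0 (w0 : List A) γ', M.Steps γ0 w0 γ' → γ' = [] →
        w0.length ≤ n + 1 → (mkRT M α' hα').Steps (e M γ0) w0 [] from
      aux γ w [] h rfl hw
    intro γ0 w0 γ' h0
    induction h0 with
    | refl γ1 =>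
      rintro rfl _
      rw [e_eq_nil_of_steps M [] (.refl [])]
      exact .refl []
    | @input X γt u a ws γ' hδ s ihs =>
      rintro rfl hlen
      -- X has an input move, so it is ε-free, hence not null and live via itself
      have hXe : M.δ X none = none := by
        by_contra h0
        simp [M.det X h0] at hδ
      have hXn : ¬ Null M X := by
        intro hn
        cases hn with
        | eps h' s' => rw [hXe] at h'; cases h'
      have hl : LiveW M X := ⟨(X, []), .refl [X], hXe⟩
      obtain ⟨hc1, hc2⟩ := choose_eq M hl (.refl [X]) hXe
      have hδ' : delta' M X a = some (e M u) := by
        rw [delta', dif_pos hl, hc1, hc2, hδ]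
        simp
      have hrec : (mkRT M α' hα').Steps (e M (u ++ γt)) ws [] :=
        ih ws (Nat.le_of_succ_le_succ hlen) (u ++ γt) s
      rw [e_cons, if_neg hXn]
      exact .step hδ' (by rw [← e_append]; exact hrec)
    | @eps X γt u ws γ' hδ s ihs =>
      rintro rfl hlen
      by_cases hXn : Null M X
      · -- X vanishes; then u consists of null symbols
        have hu : e M u = [] := by
          cases hXn with
          | eps h' s' =>
            rw [hδ, Option.some.injEq] at h'
            subst h'
            exact e_eq_nil_of_steps M u (by simpa using s')
        have := ihs rfl hlen
        rw [e_append, hu, List.nil_append] at this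
        rw [e_cons, if_pos hXn]
        exact this
      · -- X is live: find its ε-closure
        rcases steps_split M (σ := u) (ρ := γt) s with ⟨w1, w2, rfl, hs1, hs2⟩
        cases w1 with
        | nil =>
          exact absurd (SDPDA.Steps.eps hδ (by simpa using hs1)) hXn
        | cons a w1' =>
          have hsX : M.Steps [X] (a :: w1') [] := .eps hδ (by simpa using hs1)
          rcases steps_consume M [X] (a :: w1') [] hsX a w1' rfl with
            ⟨Y, τ, u', hcl, hY, hYa, hrest⟩
          have hl : LiveW M X := ⟨(Y, τ), hcl, hY⟩
          obtain ⟨hc1, hc2⟩ := choose_eq M hl hcl hY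
          have hδ' : delta' M X a = some (e M (u' ++ τ)) := by
            rw [delta', dif_pos hl, hc1, hc2, hYa]
            simp
          have hM : M.Steps ((u' ++ τ) ++ γt) (w1' ++ w2) [] :=
            steps_trans M (steps_lift M hrest γt) hs2
          have hlen' : (w1' ++ w2).length ≤ n := by
            simp only [List.length_append, List.length_cons] at hlen ⊢
            omega
          have hrec := ih (w1' ++ w2) hlen' ((u' ++ τ) ++ γt) hM
          rw [e_append] at hrec
          rw [e_cons, if_neg hXn]
          show (mkRT M α' hα').Steps (X :: e M γt) ((a :: w1') ++ w2) []
          exact .step hδ' hrec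

end SDPDAtoSRPDA

/-- For any stateless deterministic pushdown automaton with `n`
pushdown symbols accepting a language `L ≠ {ε}`, there is an equivalent
stateless realtime pushdown automaton with at most `n` pushdown symbols. -/
theorem sdpda_to_srpda {A : Type} (M : SDPDA A)
    (hL : {w : List A | M.Accepts w} ≠ {[]}) :
    ∃ M' : SRPDA A, Fintype.card M'.Γ ≤ Fintype.card M.Γ ∧
      ∀ w : List A, M'.Accepts w ↔ M.Accepts w := by
  classical
  have hne : SDPDAtoSRPDA.e M M.α ≠ [] := by
    intro h0
    apply hL
    ext w
    simp only [Set.mem_setOf_eq, Set.mem_singleton_iff]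
    constructor
    · intro hw
      have hb := SDPDAtoSRPDA.backward M (α' := M.α) (hα' := M.α_ne)
        w.length w le_rfl M.α hw
      rw [h0] at hb
      match hb with
      | .refl _ => rfl
    · rintro rfl
      exact SDPDAtoSRPDA.steps_of_e_nil M M.α h0
  refine ⟨SDPDAtoSRPDA.mkRT M (SDPDAtoSRPDA.e M M.α) hne, le_refl _, fun w => ⟨?_, ?_⟩⟩
  · intro hw
    have h1 : M.Steps (SDPDAtoSRPDA.e M M.α) w [] :=
      SDPDAtoSRPDA.forward M _ w [] hw rfl
    have h2 := SDPDAtoSRPDA.unerase M M.α (ρ := []) (by simpa using h1)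
    simpa [SDPDA.Accepts] using h2
  · intro hw
    exact SDPDAtoSRPDA.backward M (α' := SDPDAtoSRPDA.e M M.α) (hα' := hne)
      w.length w le_rfl M.α hw
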